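/- For every integer k ≥ 0, every dimension n ≥ 1, and every x ∈ ℝ^n, ∫_{ℝ^n} ‖u‖^{2k} e^{−π‖u‖²} e^{2πi u·x} du = k! π^{−k} e^{−π‖x‖²} L_k^{n/2−1}(π‖x‖²), where L_k^{n/2−1} is the generalized Laguerre polynomial of degree k with parameter n/2 − 1. -/

import Mathlib

open MeasureTheory
open scoped Real

/-- The generalized Laguerre polynomial of degree `k` with parameter `α`:
`L_k^α(t) = ∑_{m=0}^k (-1)^m binom(k+α, k-m) t^m / m!`, where
`binom(k+α, k-m) = (∏_{l=m+1}^k (α + l)) / (k-m)!`. -/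
noncomputable def laguerre (α : ℝ) (k : ℕ) (t : ℝ) : ℝ :=
  ∑ m ∈ Finset.range (k + 1),
    (-1 : ℝ) ^ m * ((∏ l ∈ Finset.Icc (m + 1) k, (α + l)) / ((k - m).factorial : ℝ)) *
      t ^ m / (m.factorial : ℝ)

noncomputable def lagC (α : ℝ) (k m : ℕ) : ℝ :=
  (-1 : ℝ) ^ m * ((∏ l ∈ Finset.Icc (m + 1) k, (α + l)) / ((k - m).factorial : ℝ)) /
    (m.factorial : ℝ)

lemma laguerre_eq (α : ℝ) (k : ℕ) (t : ℝ) :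
    laguerre α k t = ∑ m ∈ Finset.range (k + 1), lagC α k m * t ^ m := by
  refine Finset.sum_congr rfl fun m _ => ?_
  rw [lagC]; ring

lemma coeff0 (α : ℝ) (k : ℕ) :
    (k + 1 : ℝ) * lagC α (k + 1) 0 = lagC α k 0 * ((α + 1) + k) := by
  rw [lagC, lagC]
  rw [Finset.prod_Icc_succ_top (Nat.le_add_left 1 k) (f := fun l : ℕ => α + l)]
  simp only [Nat.sub_zero, Nat.factorial_succ, pow_zero, Nat.factorial_zero]
  have hk : ((k).factorial : ℝ) ≠ 0 := Nat.cast_ne_zero.mpr (Nat.factorial_ne_zero k)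
  field_simp
  push_cast
  ring

lemma coeffTop (α : ℝ) (k : ℕ) :
    (k + 1 : ℝ) * lagC α (k + 1) (k + 1) = - lagC α k k := by
  rw [lagC, lagC]
  rw [Finset.Icc_eq_empty (by omega), Finset.Icc_eq_empty (by omega)]
  simp only [Finset.prod_empty, Nat.sub_self, Nat.factorial_zero, Nat.factorial_succ, pow_succ]
  have hk : ((k).factorial : ℝ) ≠ 0 := Nat.cast_ne_zero.mpr (Nat.factorial_ne_zero k)
  field_simp
  push_cast
  ring

lemma coeffMid (α : ℝ) (k m : ℕ) (h : m < k) :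
    (k + 1 : ℝ) * lagC α (k + 1) (m + 1) =
      lagC α k (m + 1) * ((α + 1) + k + (m + 1)) - lagC α k m := by
  obtain ⟨d, rfl⟩ : ∃ d, k = m + 1 + d := ⟨k - (m + 1), by omega⟩
  rw [lagC, lagC, lagC]
  have h1 : m + 1 + d + 1 - (m + 1) = d + 1 := by omega
  have h2 : m + 1 + d - (m + 1) = d := by omega
  have h3 : m + 1 + d - m = d + 1 := by omega
  rw [h1, h2, h3]
  have e1 : ∏ l ∈ Finset.Icc (m + 1 + 1) (m + 1 + d + 1), (α + l) =
      (∏ l ∈ Finset.Icc (m + 1 + 1) (m + 1 + d), (α + l)) * (α + (m + 1 + d + 1 : ℕ)) := by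
    rw [Finset.prod_Icc_succ_top (by omega)]
  have e2 : ∏ l ∈ Finset.Icc (m + 1) (m + 1 + d), (α + l) =
      (α + (m + 1 : ℕ)) * ∏ l ∈ Finset.Icc (m + 1 + 1) (m + 1 + d), (α + l) := by
    rw [← Finset.Ico_add_one_right_eq_Icc, Finset.prod_eq_prod_Ico_succ_bot (by omega),
      Finset.Ico_add_one_right_eq_Icc]
  rw [e1, e2]
  have hd : ((d).factorial : ℝ) ≠ 0 := Nat.cast_ne_zero.mpr (Nat.factorial_ne_zero d)
  have hm : ((m).factorial : ℝ) ≠ 0 := Nat.cast_ne_zero.mpr (Nat.factorial_ne_zero m)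
  simp only [Nat.factorial_succ]
  field_simp
  push_cast
  ring

lemma sum_split (p q r : ℕ → ℝ) (k : ℕ) (h0 : r 0 = p 0) (htop : r (k + 1) = q k)
    (hmid : ∀ m, m < k → r (m + 1) = p (m + 1) + q m) :
    ∑ m ∈ Finset.range (k + 1), (p m + q m) = ∑ m ∈ Finset.range (k + 2), r m := by
  rw [Finset.sum_add_distrib, Finset.sum_range_succ' p k, Finset.sum_range_succ q k,
    Finset.sum_range_succ r (k + 1), Finset.sum_range_succ' r k]
  rw [Finset.sum_congr rfl (fun m hm => hmid m (Finset.mem_range.mp hm)),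
    Finset.sum_add_distrib, h0, htop]
  ring

noncomputable def phi (α : ℝ) (k : ℕ) (c t : ℝ) : ℝ :=
  ∑ m ∈ Finset.range (k + 1),
    ((k.factorial : ℝ) / π ^ k * lagC α k m) * c ^ m *
      t ^ (-(α + 1 + k + m)) * Real.exp (-(c / t))

lemma phi_hasDerivAt (α : ℝ) (k : ℕ) (c : ℝ) {t : ℝ} (ht : 0 < t) :
    HasDerivAt (phi α k c) (-π * phi α (k + 1) c t) t := by
  have htne : t ≠ 0 := ht.ne'
  have hterm : ∀ m : ℕ, HasDerivAt (fun s : ℝ =>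
      ((k.factorial : ℝ) / π ^ k * lagC α k m) * c ^ m *
        s ^ (-(α + 1 + k + m)) * Real.exp (-(c / s)))
      (((k.factorial : ℝ) / π ^ k * lagC α k m) * c ^ m *
        ((-(α + 1 + k + m)) * t ^ (-(α + 1 + k + m) - 1) * Real.exp (-(c / t))
          + t ^ (-(α + 1 + k + m)) * (Real.exp (-(c / t)) * (c / t ^ 2)))) t := by
    intro m
    have h1 : HasDerivAt (fun s : ℝ => s ^ (-(α + 1 + k + m)))
        ((-(α + 1 + k + m)) * t ^ (-(α + 1 + k + m) - 1)) t :=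
      Real.hasDerivAt_rpow_const (Or.inl htne)
    have h2 : HasDerivAt (fun s : ℝ => Real.exp (-(c / s)))
        (Real.exp (-(c / t)) * (c / t ^ 2)) t := by
      have hinv : HasDerivAt (fun s : ℝ => -(c * s⁻¹)) (c / t ^ 2) t := by
        have := ((hasDerivAt_inv htne).const_mul c).neg
        exact this.congr_deriv (by ring)
      have := hinv.exp
      simp only [← div_eq_mul_inv] at this
      exact this
    have := (h1.mul h2).const_mul (((k.factorial : ℝ) / π ^ k * lagC α k m) * c ^ m)
    refine this.congr_of_eventuallyEq (Filter.Eventually.of_forall fun s => ?_)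
    simp only [Pi.mul_apply]; ring
  have hsum : HasDerivAt (phi α k c)
      (∑ m ∈ Finset.range (k + 1),
        ((k.factorial : ℝ) / π ^ k * lagC α k m) * c ^ m *
          ((-(α + 1 + k + m)) * t ^ (-(α + 1 + k + m) - 1) * Real.exp (-(c / t))
            + t ^ (-(α + 1 + k + m)) * (Real.exp (-(c / t)) * (c / t ^ 2)))) t := by
    exact HasDerivAt.fun_sum (fun m (_ : m ∈ Finset.range (k + 1)) => hterm m)
  convert hsum using 1
  set g : ℕ → ℝ := fun m => t ^ (-(α + 1 + (k : ℝ) + m) - 1) * Real.exp (-(c / t)) with hg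
  set p : ℕ → ℝ := fun m =>
    (-(α + 1 + (k : ℝ) + m)) * ((k.factorial : ℝ) / π ^ k * lagC α k m) * c ^ m * g m with hp
  set q : ℕ → ℝ := fun m =>
    ((k.factorial : ℝ) / π ^ k * lagC α k m) * c ^ (m + 1) * g (m + 1) with hq
  set r : ℕ → ℝ := fun m =>
    (-(((k + 1).factorial : ℝ)) / π ^ k * lagC α (k + 1) m) * c ^ m * g m with hr
  have hpow : ∀ m : ℕ, t ^ (-(α + 1 + (k : ℝ) + m)) * (Real.exp (-(c / t)) * (c / t ^ 2))
      = c * g (m + 1) := by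
    intro m
    have h2 : t ^ (-(α + 1 + (k : ℝ) + ((m + 1 : ℕ) : ℝ)) - 1)
        = t ^ (-(α + 1 + (k : ℝ) + m)) / t ^ (2 : ℝ) := by
      rw [← Real.rpow_sub ht]
      congr 1
      push_cast; ring
    rw [hg]
    simp only [h2]
    rw [show t ^ (2 : ℝ) = t ^ (2 : ℕ) by rw [← Real.rpow_natCast]; norm_num]
    field_simp
  have hfac : (((k + 1).factorial : ℝ)) = (k + 1) * (k.factorial : ℝ) := by
    rw [Nat.factorial_succ]; push_cast; ring
  have hR : -π * phi α (k + 1) c t = ∑ m ∈ Finset.range (k + 2), r m := by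
    rw [phi, Finset.mul_sum]
    refine Finset.sum_congr rfl fun m _ => ?_
    have h3 : t ^ (-(α + 1 + ((k + 1 : ℕ) : ℝ) + m))
        = t ^ (-(α + 1 + (k : ℝ) + m) - 1) := by
      congr 1; push_cast; ring
    rw [h3, hr, hg]
    have hπ : (π : ℝ) ≠ 0 := Real.pi_ne_zero
    field_simp
    ring
  have hL : ∑ m ∈ Finset.range (k + 1),
      ((k.factorial : ℝ) / π ^ k * lagC α k m) * c ^ m *
        ((-(α + 1 + k + m)) * t ^ (-(α + 1 + k + m) - 1) * Real.exp (-(c / t))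
          + t ^ (-(α + 1 + k + m)) * (Real.exp (-(c / t)) * (c / t ^ 2)))
      = ∑ m ∈ Finset.range (k + 1), (p m + q m) := by
    refine Finset.sum_congr rfl fun m _ => ?_
    rw [mul_add, hpow m, hp, hq, hg]
    ring
  rw [hR, hL]
  refine (sum_split p q r k ?_ ?_ ?_).symm
  · rw [hr, hp, hg]
    simp only [Nat.cast_zero]
    have h0 := coeff0 α k
    linear_combination (-(((k.factorial : ℝ)) / π ^ k) * c ^ 0 *
      (t ^ (-(α + 1 + (k : ℝ) + 0) - 1) * Real.exp (-(c / t)))) * h0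
      - (lagC α (k + 1) 0 * c ^ 0 *
        (t ^ (-(α + 1 + (k : ℝ) + 0) - 1) * Real.exp (-(c / t))) / π ^ k) * hfac
  · rw [hr, hq, hg]
    have h0 := coeffTop α k
    push_cast
    linear_combination (-(((k.factorial : ℝ)) / π ^ k) * c ^ (k + 1) *
      (t ^ (-(α + 1 + (k : ℝ) + ((k : ℝ) + 1)) - 1) * Real.exp (-(c / t)))) * h0
      - (lagC α (k + 1) (k + 1) * c ^ (k + 1) *
        (t ^ (-(α + 1 + (k : ℝ) + ((k : ℝ) + 1)) - 1) * Real.exp (-(c / t))) / π ^ k) * hfac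
  · intro m hm
    rw [hr, hp, hq, hg]
    have h0 := coeffMid α k m hm
    push_cast
    linear_combination (-(((k.factorial : ℝ)) / π ^ k) * c ^ (m + 1) *
      (t ^ (-(α + 1 + (k : ℝ) + ((m : ℝ) + 1)) - 1) * Real.exp (-(c / t)))) * h0
      - (lagC α (k + 1) (m + 1) * c ^ (m + 1) *
        (t ^ (-(α + 1 + (k : ℝ) + ((m : ℝ) + 1)) - 1) * Real.exp (-(c / t))) / π ^ k) * hfac

noncomputable def II (n k : ℕ) (x : EuclideanSpace ℝ (Fin n)) (t : ℝ) : ℂ :=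
  ∫ u : EuclideanSpace ℝ (Fin n),
    ((‖u‖ ^ (2 * k) * Real.exp (-(t * π) * ‖u‖ ^ 2) : ℝ) : ℂ) *
      Complex.exp (2 * π * Complex.I * ((inner ℝ u x : ℝ) : ℂ))

lemma integrable_pow_gauss (n q : ℕ) {b : ℝ} (hb : 0 < b) :
    Integrable (fun u : EuclideanSpace ℝ (Fin n) => ‖u‖ ^ (2 * q) * Real.exp (-b * ‖u‖ ^ 2)) := by
  have hg : Integrable (fun u : EuclideanSpace ℝ (Fin n) => Real.exp (-(b / 2) * ‖u‖ ^ 2)) := by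
    have h := (GaussianFourier.integrable_cexp_neg_mul_sq_norm_add (V := EuclideanSpace ℝ (Fin n))
      (b := ((b / 2 : ℝ) : ℂ)) (by simpa using half_pos hb) 0 0).norm
    refine h.congr (Filter.Eventually.of_forall fun v => ?_)
    have e1 : (-((b / 2 : ℝ) : ℂ) * (‖v‖ : ℂ) ^ 2 + 0 * ((inner ℝ (0 : EuclideanSpace ℝ (Fin n)) v : ℝ) : ℂ))
        = ((-(b / 2) * ‖v‖ ^ 2 : ℝ) : ℂ) := by push_cast; ring
    simp only []
    rw [e1, ← Complex.ofReal_exp, Complex.norm_real, Real.norm_eq_abs, Real.abs_exp]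
  set C : ℝ := (q.factorial : ℝ) * (2 / b) ^ q with hC
  have hCpos : 0 ≤ C := by positivity
  refine Integrable.mono' (hg.const_mul C) ?_ (Filter.Eventually.of_forall fun u => ?_)
  · apply Continuous.aestronglyMeasurable
    fun_prop
  · rw [Real.norm_eq_abs, abs_of_nonneg (by positivity)]
    have h1 := Real.pow_div_factorial_le_exp (x := b / 2 * ‖u‖ ^ 2) (by positivity) q
    have hq : (0:ℝ) < (q.factorial : ℝ) := by positivity
    calc ‖u‖ ^ (2 * q) * Real.exp (-b * ‖u‖ ^ 2)
        = ((b / 2 * ‖u‖ ^ 2) ^ q / (q.factorial : ℝ)) * C * Real.exp (-b * ‖u‖ ^ 2) := by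
          rw [hC, pow_mul, mul_pow, div_pow]
          have hb0 : b ≠ 0 := hb.ne'
          field_simp
          have hbb : b ^ q * b⁻¹ ^ q = 1 := by rw [← mul_pow, mul_inv_cancel₀ hb0, one_pow]
          linear_combination (-(‖u‖ ^ (q * 2) * 2 ^ q)) * hbb
      _ ≤ Real.exp (b / 2 * ‖u‖ ^ 2) * C * Real.exp (-b * ‖u‖ ^ 2) := by
          apply mul_le_mul_of_nonneg_right _ (Real.exp_nonneg _)
          exact mul_le_mul_of_nonneg_right h1 hCpos
      _ = C * Real.exp (-(b / 2) * ‖u‖ ^ 2) := by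
          rw [mul_comm, ← mul_assoc, ← Real.exp_add]
          ring_nf

lemma II_integrand_integrable (n k : ℕ) (x : EuclideanSpace ℝ (Fin n)) {t : ℝ} (ht : 0 < t) :
    Integrable (fun u : EuclideanSpace ℝ (Fin n) =>
      ((‖u‖ ^ (2 * k) * Real.exp (-(t * π) * ‖u‖ ^ 2) : ℝ) : ℂ) *
        Complex.exp (2 * π * Complex.I * ((inner ℝ u x : ℝ) : ℂ))) := by
  have hb : (0:ℝ) < t * π := mul_pos ht Real.pi_pos
  refine Integrable.mono' (integrable_pow_gauss n k hb) ?_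
    (Filter.Eventually.of_forall fun u => ?_)
  · apply Continuous.aestronglyMeasurable
    have hinner : Continuous fun u : EuclideanSpace ℝ (Fin n) => (inner ℝ u x : ℝ) :=
      continuous_id.inner continuous_const
    exact (Complex.continuous_ofReal.comp ((continuous_norm.pow _).mul
      (Real.continuous_exp.comp (continuous_const.mul (continuous_norm.pow 2))))).mul
      (Complex.continuous_exp.comp (continuous_const.mul
        (Complex.continuous_ofReal.comp hinner)))
  · rw [norm_mul]
    have h1 : ‖Complex.exp (2 * π * Complex.I * ((inner ℝ u x : ℝ) : ℂ))‖ = 1 := by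
      rw [Complex.norm_exp]
      simp [mul_comm, mul_assoc]
    rw [h1, mul_one, Complex.norm_real, Real.norm_eq_abs,
      abs_of_nonneg (by positivity : (0:ℝ) ≤ ‖u‖ ^ (2 * k) * Real.exp (-(t * π) * ‖u‖ ^ 2))]

lemma II_hasDerivAt (n k : ℕ) (x : EuclideanSpace ℝ (Fin n)) {t : ℝ} (ht : 0 < t) :
    HasDerivAt (II n k x) ((-π : ℂ) * II n (k + 1) x t) t := by
  set W : EuclideanSpace ℝ (Fin n) → ℂ :=
    fun u => Complex.exp (2 * π * Complex.I * ((inner ℝ u x : ℝ) : ℂ)) with hW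
  set F : ℝ → EuclideanSpace ℝ (Fin n) → ℂ := fun s u =>
    ((‖u‖ ^ (2 * k) * Real.exp (-(s * π) * ‖u‖ ^ 2) : ℝ) : ℂ) * W u with hF
  set F' : ℝ → EuclideanSpace ℝ (Fin n) → ℂ := fun s u =>
    ((-(π * ‖u‖ ^ 2) * (‖u‖ ^ (2 * k) * Real.exp (-(s * π) * ‖u‖ ^ 2)) : ℝ) : ℂ) * W u with hF'
  have hWnorm : ∀ u, ‖W u‖ = 1 := by
    intro u
    rw [hW]
    simp only []
    rw [Complex.norm_exp]
    simp [mul_comm, mul_assoc]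
  have key := hasDerivAt_integral_of_dominated_loc_of_deriv_le (μ := volume)
    (F := F) (F' := F') (x₀ := t) (s := Metric.ball t (t / 2)) (Metric.ball_mem_nhds t (half_pos ht))
    (bound := fun u => π * (‖u‖ ^ (2 * (k + 1)) * Real.exp (-(t / 2 * π) * ‖u‖ ^ 2)))
    ?_ ?_ ?_ ?_ ?_ ?_
  · -- conclude
    have h2 : (∫ u, F' t u) = (-π : ℂ) * II n (k + 1) x t := by
      rw [II, ← integral_const_mul]
      refine integral_congr_ae (Filter.Eventually.of_forall fun u => ?_)
      rw [hF']
      simp only []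
      rw [hW]
      have : (-(π * ‖u‖ ^ 2) * (‖u‖ ^ (2 * k) * Real.exp (-(t * π) * ‖u‖ ^ 2)) : ℝ)
          = -π * (‖u‖ ^ (2 * (k + 1)) * Real.exp (-(t * π) * ‖u‖ ^ 2)) := by ring
      rw [this]
      push_cast
      ring
    rw [← h2]
    exact key.2
  · -- measurability of F s
    filter_upwards with s
    apply Continuous.aestronglyMeasurable
    have hinner : Continuous fun u : EuclideanSpace ℝ (Fin n) => (inner ℝ u x : ℝ) :=
      continuous_id.inner continuous_const
    exact (Complex.continuous_ofReal.comp ((continuous_norm.pow _).mul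
      (Real.continuous_exp.comp (continuous_const.mul (continuous_norm.pow 2))))).mul
      (Complex.continuous_exp.comp (continuous_const.mul
        (Complex.continuous_ofReal.comp hinner)))
  · exact II_integrand_integrable n k x ht
  · apply Continuous.aestronglyMeasurable
    have hinner : Continuous fun u : EuclideanSpace ℝ (Fin n) => (inner ℝ u x : ℝ) :=
      continuous_id.inner continuous_const
    exact (Complex.continuous_ofReal.comp ((continuous_const.mul (continuous_norm.pow 2)).neg.mul
      ((continuous_norm.pow _).mul
        (Real.continuous_exp.comp (continuous_const.mul (continuous_norm.pow 2)))))).mul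
      (Complex.continuous_exp.comp (continuous_const.mul
        (Complex.continuous_ofReal.comp hinner)))
  · -- bound on F'
    filter_upwards with u
    intro s hs
    have hs2 : t / 2 < s := by
      rw [Metric.mem_ball, Real.dist_eq, abs_lt] at hs
      linarith
    rw [hF']
    simp only []
    rw [norm_mul, hWnorm, mul_one, Complex.norm_real, Real.norm_eq_abs, abs_mul, abs_neg,
      abs_of_nonneg (by positivity : (0:ℝ) ≤ π * ‖u‖ ^ 2),
      abs_of_nonneg (by positivity : (0:ℝ) ≤ ‖u‖ ^ (2 * k) * Real.exp (-(s * π) * ‖u‖ ^ 2))]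
    have hexp : Real.exp (-(s * π) * ‖u‖ ^ 2) ≤ Real.exp (-(t / 2 * π) * ‖u‖ ^ 2) :=
      Real.exp_le_exp.mpr (by nlinarith [mul_nonneg (mul_nonneg (sub_pos.mpr hs2).le Real.pi_pos.le) (sq_nonneg ‖u‖)])
    have h3 : π * ‖u‖ ^ 2 * (‖u‖ ^ (2 * k) * Real.exp (-(s * π) * ‖u‖ ^ 2))
        = π * (‖u‖ ^ (2 * (k + 1)) * Real.exp (-(s * π) * ‖u‖ ^ 2)) := by ring
    rw [h3]
    gcongr
  · exact (integrable_pow_gauss n (k + 1) (mul_pos (half_pos ht) Real.pi_pos)).const_mul π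
  · -- differentiability
    filter_upwards with u
    intro s hs
    rw [hF, hF']
    simp only []
    have heq : ∀ r : ℝ, ((‖u‖ ^ (2 * k) * Real.exp (-(r * π) * ‖u‖ ^ 2) : ℝ) : ℂ) * W u
        = ((‖u‖ ^ (2 * k) : ℝ) : ℂ) * W u * Complex.exp (((-(π * ‖u‖ ^ 2) * r : ℝ) : ℂ)) := by
      intro r
      rw [show (-(π * ‖u‖ ^ 2) * r : ℝ) = -(r * π) * ‖u‖ ^ 2 from by ring, ← Complex.ofReal_exp]
      push_cast
      ring
    have h0 : HasDerivAt (fun r : ℝ => ((-(π * ‖u‖ ^ 2) * r : ℝ) : ℂ))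
        ((-(π * ‖u‖ ^ 2) : ℝ) : ℂ) s :=
      HasDerivAt.ofReal_comp (by
        have := (hasDerivAt_id s).const_mul (-(π * ‖u‖ ^ 2))
        simp only [mul_one] at this
        exact this.congr_of_eventuallyEq (Filter.Eventually.of_forall fun r => rfl))
    have hd : HasDerivAt (fun r : ℝ => ((‖u‖ ^ (2 * k) : ℝ) : ℂ) * W u *
        Complex.exp (((-(π * ‖u‖ ^ 2) * r : ℝ) : ℂ)))
        (((‖u‖ ^ (2 * k) : ℝ) : ℂ) * W u *
          (Complex.exp (((-(π * ‖u‖ ^ 2) * s : ℝ) : ℂ)) * ((-(π * ‖u‖ ^ 2) : ℝ) : ℂ))) s :=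
      (h0.cexp).const_mul _
    refine HasDerivAt.congr_of_eventuallyEq ?_ (Filter.Eventually.of_forall heq)
    refine hd.congr_deriv ?_
    rw [show (-(π * ‖u‖ ^ 2) * s : ℝ) = -(s * π) * ‖u‖ ^ 2 from by ring, ← Complex.ofReal_exp]
    push_cast
    ring

lemma lagC_zero_zero (α : ℝ) : lagC α 0 0 = 1 := by
  rw [lagC]
  rw [Finset.Icc_eq_empty (by omega)]
  simp

lemma II_zero (n : ℕ) (x : EuclideanSpace ℝ (Fin n)) {t : ℝ} (ht : 0 < t) :
    II n 0 x t = ((phi ((n : ℝ) / 2 - 1) 0 (π * ‖x‖ ^ 2) t : ℝ) : ℂ) := by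
  have hb : (0 : ℝ) < t * π := mul_pos ht Real.pi_pos
  have key := GaussianFourier.integral_cexp_neg_mul_sq_norm_add
    (V := EuclideanSpace ℝ (Fin n)) (b := ((t * π : ℝ) : ℂ))
    (by simpa using hb) (2 * π * Complex.I) x
  have lhs_eq : II n 0 x t = ∫ v : EuclideanSpace ℝ (Fin n),
      Complex.exp (-((t * π : ℝ) : ℂ) * (‖v‖ : ℂ) ^ 2 +
        (2 * π * Complex.I) * ((inner ℝ x v : ℝ) : ℂ)) := by
    rw [II]
    refine integral_congr_ae (Filter.Eventually.of_forall fun u => ?_)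
    simp only [Nat.mul_zero, pow_zero, one_mul]
    rw [Complex.exp_add, real_inner_comm x u]
    rw [show (-((t * π : ℝ) : ℂ) * (‖u‖ : ℂ) ^ 2) = ((-(t * π) * ‖u‖ ^ 2 : ℝ) : ℂ) by
      norm_cast]
    rw [← Complex.ofReal_exp]
  rw [lhs_eq, key]
  have hfr : (Module.finrank ℝ (EuclideanSpace ℝ (Fin n)) : ℂ) = (n : ℂ) := by
    rw [finrank_euclideanSpace_fin]
  rw [hfr]
  -- simplify phi at k = 0
  rw [phi]
  rw [Finset.sum_range_one]
  simp only [Nat.factorial_zero, pow_zero, Nat.cast_zero, lagC_zero_zero, Nat.cast_one]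
  have hπc : ((π : ℝ) : ℂ) ≠ 0 := Complex.ofReal_ne_zero.mpr Real.pi_ne_zero
  have htc : ((t : ℝ) : ℂ) ≠ 0 := Complex.ofReal_ne_zero.mpr ht.ne'
  have e1 : ((π : ℂ) / ((t * π : ℝ) : ℂ)) = ((t⁻¹ : ℝ) : ℂ) := by
    push_cast
    field_simp
  have e2 : ((n : ℂ) / 2) = (((n : ℝ) / 2 : ℝ) : ℂ) := by push_cast; ring
  rw [e1, e2, ← Complex.ofReal_cpow (inv_nonneg.mpr ht.le)]
  have e3 : (t⁻¹ : ℝ) ^ ((n : ℝ) / 2) = t ^ (-((n : ℝ) / 2 - 1 + 1 + 0 + 0)) := by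
    rw [Real.inv_rpow ht.le, ← Real.rpow_neg ht.le]
    norm_num
  have e4 : ((2 * (π : ℂ) * Complex.I) ^ 2 * (‖x‖ : ℂ) ^ 2 / (4 * ((t * π : ℝ) : ℂ)))
      = ((-(π * ‖x‖ ^ 2 / t) : ℝ) : ℂ) := by
    rw [mul_pow, mul_pow, Complex.I_sq]
    push_cast
    field_simp
    ring
  rw [e3, e4, ← Complex.ofReal_exp]
  push_cast
  ring

lemma II_eq_phi (n : ℕ) (x : EuclideanSpace ℝ (Fin n)) (k : ℕ) :
    ∀ t : ℝ, 0 < t → II n k x t = ((phi ((n : ℝ) / 2 - 1) k (π * ‖x‖ ^ 2) t : ℝ) : ℂ) := by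
  induction k with
  | zero => exact fun t ht => II_zero n x ht
  | succ k ih =>
    intro t ht
    have h1 := II_hasDerivAt n k x ht
    have h2 : (fun s => ((phi ((n : ℝ) / 2 - 1) k (π * ‖x‖ ^ 2) s : ℝ) : ℂ))
        =ᶠ[nhds t] II n k x := by
      filter_upwards [Ioi_mem_nhds ht] with s hs
      exact (ih s hs).symm
    have h3 := h1.congr_of_eventuallyEq h2
    have h4 : HasDerivAt (fun s => ((phi ((n : ℝ) / 2 - 1) k (π * ‖x‖ ^ 2) s : ℝ) : ℂ))
        (((-π * phi ((n : ℝ) / 2 - 1) (k + 1) (π * ‖x‖ ^ 2) t : ℝ) : ℂ)) t :=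
      HasDerivAt.ofReal_comp (phi_hasDerivAt _ k _ ht)
    have h5 := h3.unique h4
    have hπ : (-(π : ℂ)) ≠ 0 :=
      neg_ne_zero.mpr (Complex.ofReal_ne_zero.mpr Real.pi_ne_zero)
    push_cast at h5
    exact mul_left_cancel₀ hπ h5

/-- **Fourier inversion of `‖u‖^{2k} e^{-π ‖u‖²}` via Laguerre polynomials.**
For every integer `k ≥ 0`, dimension `n ≥ 1` and `x ∈ EuclideanSpace`,
`∫_{ℝ^n} ‖u‖^{2k} e^{-π‖u‖²} e^{2πi u·x} du = k! π^{-k} e^{-π‖x‖²} L_k^{n/2-1}(π‖x‖²)`. -/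
theorem integral_norm_pow_gaussian_exp {n : ℕ} (hn : 1 ≤ n) (k : ℕ)
    (x : EuclideanSpace ℝ (Fin n)) :
    ∫ u : EuclideanSpace ℝ (Fin n),
        ((‖u‖ ^ (2 * k) * Real.exp (-π * ‖u‖ ^ 2) : ℝ) : ℂ) *
          Complex.exp (2 * π * Complex.I * ((inner ℝ u x : ℝ) : ℂ)) =
      (((k.factorial : ℝ) / π ^ k * Real.exp (-π * ‖x‖ ^ 2) *
          laguerre ((n : ℝ) / 2 - 1) k (π * ‖x‖ ^ 2) : ℝ) : ℂ) := by
  have h0 : (∫ u : EuclideanSpace ℝ (Fin n),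
      ((‖u‖ ^ (2 * k) * Real.exp (-π * ‖u‖ ^ 2) : ℝ) : ℂ) *
        Complex.exp (2 * π * Complex.I * ((inner ℝ u x : ℝ) : ℂ))) = II n k x 1 := by
    rw [II]
    norm_num
  rw [h0, II_eq_phi n x k 1 one_pos]
  norm_cast
  rw [phi, laguerre_eq, Finset.mul_sum]
  refine Finset.sum_congr rfl fun m _ => ?_
  rw [Real.one_rpow, div_one]
  rw [show -π * ‖x‖ ^ 2 = -(π * ‖x‖ ^ 2) from by ring]
  ring
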